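/- Let R be a semiprime ring and L a Lie ideal with ℓ_R([L, R]) = 0 (zero left annihilator). If a[L, R]a = 0 for some a ∈ R, then aLa = 0. Consequently, R is L-semiprime if and only if R is [L, R]-semiprime. -/

import Mathlib

/-- The additive subgroup generated by commutators `a * b - b * a` with `a ∈ A`, `b ∈ B`. -/
def lieBr {R : Type*} [Ring R] (A B : Set R) : AddSubgroup R :=
  AddSubgroup.closure {z : R | ∃ a ∈ A, ∃ b ∈ B, z = a * b - b * a}

theorem stmt16 {R : Type*} [Ring R]
    (hsp : ∀ x : R, (∀ r : R, x * r * x = 0) → x = 0)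
    (L : AddSubgroup R) (hL : ∀ x ∈ L, ∀ r : R, x * r - r * x ∈ L)
    (hann : ∀ r : R, (∀ x ∈ lieBr (L : Set R) Set.univ, r * x = 0) → r = 0) :
    (∀ a : R, (∀ x ∈ lieBr (L : Set R) Set.univ, a * x * a = 0) → ∀ x ∈ L, a * x * a = 0) ∧
    ((∀ a : R, (∀ x ∈ L, a * x * a = 0) → a = 0) ↔
      (∀ a : R, (∀ x ∈ lieBr (L : Set R) Set.univ, a * x * a = 0) → a = 0)) := by
  set K := lieBr (L : Set R) Set.univ with hK
  -- generators are in K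
  have hgen : ∀ x ∈ L, ∀ b : R, x * b - b * x ∈ K := by
    intro x hx b
    exact AddSubgroup.subset_closure ⟨x, hx, b, Set.mem_univ b, rfl⟩
  -- K ⊆ L
  have hKL : ∀ k ∈ K, k ∈ L := by
    intro k hk
    have : K ≤ L := by
      rw [hK, lieBr, AddSubgroup.closure_le]
      rintro z ⟨x, hx, b, -, rfl⟩
      exact hL x hx b
    exact this hk
  -- K is a Lie ideal
  have hKideal : ∀ k ∈ K, ∀ r : R, k * r - r * k ∈ K := by
    intro k hk
    induction hk using AddSubgroup.closure_induction with
    | mem z hz =>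
      obtain ⟨x, hx, b, -, rfl⟩ := hz
      intro r
      have h1 : (x * r - r * x) * b - b * (x * r - r * x) ∈ K :=
        hgen _ (hL x hx r) b
      have h2 : x * (b * r - r * b) - (b * r - r * b) * x ∈ K :=
        hgen x hx _
      have := K.add_mem h1 h2
      convert this using 1
      noncomm_ring
    | zero => intro r; simpa using K.zero_mem
    | add x y hx hy ihx ihy =>
      intro r
      have := K.add_mem (ihx r) (ihy r)
      convert this using 1
      noncomm_ring
    | neg x hx ihx =>
      intro r
      have := K.neg_mem (ihx r)
      convert this using 1
      noncomm_ring
  -- main step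
  have main : ∀ a : R, (∀ x ∈ K, a * x * a = 0) → ∀ x ∈ L, a * x * a = 0 := by
    intro a h
    -- a * a * k = 0 for all k ∈ K
    have h2 : ∀ k ∈ K, a * a * k = 0 := by
      intro k hk
      apply hsp
      intro r
      have e1 : a * (k * (r * a) - (r * a) * k) * a = 0 := h _ (hKideal k hk (r * a))
      have e2 : a * k * a = 0 := h k hk
      linear_combination (norm := noncomm_ring) a * e1 * k + a * a * r * e2 * k
    have ha2 : a * a = 0 := by
      apply hann
      intro k hk
      have := h2 k hk
      linear_combination (norm := noncomm_ring) this
    intro x hx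
    apply hsp
    intro r
    have e : a * (x * (a * r) - (a * r) * x) * a = 0 := h _ (hgen x hx (a * r))
    linear_combination (norm := noncomm_ring) e * (x * a) + ha2 * (r * x * a * x * a)
  refine ⟨main, ?_, ?_⟩
  · intro HL a ha
    exact HL a (main a ha)
  · intro HK a ha
    exact HK a fun k hk => ha k (hKL k hk)
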